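/- Let 1 ≤ s < r be integers. A subset A ⊆ F₂^r is a generic (r,s)-set if and only if for every r×s matrix M over F₂ of rank s, the set {a·M : a ∈ A} ⊆ F₂^s contains a coset of an (s−1)-dimensional subspace of F₂^s that does not contain the zero vector (i.e., an affine hyperplane of F₂^s not passing through the origin). -/

import Mathlib

/-- `A ⊆ F₂^r` is a *generic `(r,s)`-erasure correcting set* if for every `r × s` matrix `M`
over `F₂` of rank `s` there is `a ∈ A` such that the row vector `a·M` has Hamming weight `1`. -/
def IsGenericSet (r s : ℕ) (A : Set (Fin r → ZMod 2)) : Prop :=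
  ∀ M : Matrix (Fin r) (Fin s) (ZMod 2), M.rank = s →
    ∃ a ∈ A, hammingNorm (Matrix.vecMul a M) = 1

/-- `F(r,s)`: the minimum cardinality of a generic `(r,s)`-set. -/
noncomputable def Fgen (r s : ℕ) : ℕ :=
  sInf {n | ∃ A : Finset (Fin r → ZMod 2), IsGenericSet r s ↑A ∧ A.card = n}

/-- The standard bilinear form `⟨x,y⟩ = ∑ i, x i * y i` on `F₂^r`. -/
def bform {r : ℕ} (x y : Fin r → ZMod 2) : ZMod 2 := ∑ i, x i * y i

/-- `A ⊆ F₂^r` is an *(r,s)-set* if for every `s` linearly independent vectors `v₁, …, v_s`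
there is `c ∈ A` with `⟨c, v_j⟩ = 1` for all `j`. -/
def IsRSSet (r s : ℕ) (A : Set (Fin r → ZMod 2)) : Prop :=
  ∀ v : Fin s → (Fin r → ZMod 2), LinearIndependent (ZMod 2) v →
    ∃ c ∈ A, ∀ j, bform c (v j) = 1

/-- `G₁(r,s)`: the minimum cardinality of an `(r,s)`-set. -/
noncomputable def G1 (r s : ℕ) : ℕ :=
  sInf {n | ∃ A : Finset (Fin r → ZMod 2), IsRSSet r s ↑A ∧ A.card = n}

/-- `A ⊆ F₂^r` is an *(r,s)-good set* if for every `s` linearly independent vectors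
`v₁, …, v_s` and every `x ∈ F₂^s` there is `c ∈ A` with `⟨c, v_j⟩ = x j` for all `j`. -/
def IsGoodSet (r s : ℕ) (A : Set (Fin r → ZMod 2)) : Prop :=
  ∀ v : Fin s → (Fin r → ZMod 2), LinearIndependent (ZMod 2) v →
    ∀ x : Fin s → ZMod 2, ∃ c ∈ A, ∀ j, bform c (v j) = x j

/-- `G(r,s)`: the minimum cardinality of an `(r,s)`-good set. -/
noncomputable def Ggood (r s : ℕ) : ℕ :=
  sInf {n | ∃ A : Finset (Fin r → ZMod 2), IsGoodSet r s ↑A ∧ A.card = n}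

/-- A linear code `C ⊆ F₂^ι` is *s-wise intersecting* if every `s` linearly independent
codewords have a common coordinate where they are all nonzero. -/
def IsIntersectingCode {ι : Type*} (s : ℕ) (C : Submodule (ZMod 2) (ι → ZMod 2)) : Prop :=
  ∀ u : Fin s → (ι → ZMod 2), (∀ j, u j ∈ C) → LinearIndependent (ZMod 2) u →
    ∃ i, ∀ j, u j i ≠ 0

/-- `n(k,s)`: the minimum length `n` for which an `s`-wise intersecting `[n,k]` code exists. -/
noncomputable def minIntLen (k s : ℕ) : ℕ :=
  sInf {n | ∃ C : Submodule (ZMod 2) (Fin n → ZMod 2),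
    Module.finrank (ZMod 2) C = k ∧ IsIntersectingCode s C}

/-- The Gaussian binomial coefficient `[k choose s]₂` as a real number. -/
noncomputable def gaussBinom (k s : ℕ) : ℝ :=
  ∏ i ∈ Finset.range s, ((2:ℝ)^(k-i) - 1) / ((2:ℝ)^(s-i) - 1)

lemma zmod2_one {c : ZMod 2} (h : c ≠ 0) : c = 1 := by revert h; revert c; decide

lemma hammingNorm_single_one {s : ℕ} (j : Fin s) :
    hammingNorm (Pi.single j 1 : Fin s → ZMod 2) = 1 := by
  rw [hammingNorm]
  rw [show ({i | (Pi.single j 1 : Fin s → ZMod 2) i ≠ 0} : Finset (Fin s)) = {j} from ?_]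
  · exact Finset.card_singleton j
  · ext i
    simp [Pi.single_apply]

lemma exists_single_of_hammingNorm_one {s : ℕ} {x : Fin s → ZMod 2}
    (h : hammingNorm x = 1) : ∃ j, x = Pi.single j 1 := by
  rw [hammingNorm, Finset.card_eq_one] at h
  obtain ⟨j, hj⟩ := h
  have hmem : ∀ i : Fin s, x i ≠ 0 ↔ i ∈ ({j} : Finset (Fin s)) := by
    intro i; rw [← hj]; simp
  refine ⟨j, funext fun i => ?_⟩
  rcases eq_or_ne i j with rfl | hij
  · rw [Pi.single_eq_same]; exact zmod2_one ((hmem i).mpr (Finset.mem_singleton_self i))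
  · rw [Pi.single_eq_of_ne hij]
    by_contra hxi
    exact hij (Finset.mem_singleton.mp ((hmem i).mp hxi))


/-- `A` is a generic `(r,s)`-set iff for every full-rank `r × s` matrix `M`, the set
`{a·M : a ∈ A}` contains an affine hyperplane of `F₂^s` not passing through the origin. -/
theorem statement1 (r s : ℕ) (hs : 1 ≤ s) (hsr : s < r) (A : Set (Fin r → ZMod 2)) :
    IsGenericSet r s A ↔
      ∀ M : Matrix (Fin r) (Fin s) (ZMod 2), M.rank = s →
        ∃ (W : Submodule (ZMod 2) (Fin s → ZMod 2)) (v : Fin s → ZMod 2),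
          Module.finrank (ZMod 2) W = s - 1 ∧ v ∉ W ∧
          ((fun w => v + w) '' (W : Set (Fin s → ZMod 2))) ⊆
            {x | ∃ a ∈ A, Matrix.vecMul a M = x} := by
  have hV : Module.finrank (ZMod 2) (Fin s → ZMod 2) = s := by
    simp [Module.finrank_pi]
  constructor
  · intro hA M hM
    set B := {x : Fin s → ZMod 2 | ∃ a ∈ A, Matrix.vecMul a M = x} with hB
    by_cases hU : Submodule.span (ZMod 2) {x : Fin s → ZMod 2 | x ∉ B} = ⊤
    · exfalso
      obtain ⟨t, hts, hspan, hli⟩ :=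
        exists_linearIndependent (ZMod 2) {x : Fin s → ZMod 2 | x ∉ B}
      have hspan' : Submodule.span (ZMod 2) t = ⊤ := by rw [hspan, hU]
      have htfin : t.Finite := hli.setFinite
      haveI := htfin.fintype
      let b : Module.Basis t (ZMod 2) (Fin s → ZMod 2) :=
        Module.Basis.mk hli (by rw [Subtype.range_coe]; exact hspan'.ge)
      have hcard : Fintype.card t = s := by
        rw [← Module.finrank_eq_card_basis b, hV]
      let e : Fin s ≃ t := (Fintype.equivFinOfCardEq hcard).symm
      let b' : Module.Basis (Fin s) (ZMod 2) (Fin s → ZMod 2) := b.reindex e.symm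
      let f := b'.equivFun
      let P : Matrix (Fin s) (Fin s) (ZMod 2) :=
        Matrix.transpose (LinearMap.toMatrix' (f : (Fin s → ZMod 2) →ₗ[ZMod 2] (Fin s → ZMod 2)))
      have hP : ∀ x, Matrix.vecMul x P = f x := by
        intro x
        rw [Matrix.vecMul_transpose, ← Matrix.toLin'_apply, Matrix.toLin'_toMatrix']; rfl
      have hdet : IsUnit P.det := by
        rw [Matrix.det_transpose]
        have := LinearEquiv.isUnit_det f (Pi.basisFun (ZMod 2) (Fin s))
          (Pi.basisFun (ZMod 2) (Fin s))
        rwa [LinearMap.toMatrix_eq_toMatrix'] at this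
      have hrank : (M * P).rank = s := by
        rw [Matrix.rank_mul_eq_left_of_isUnit_det P M hdet, hM]
      obtain ⟨a, haA, hw⟩ := hA (M * P) hrank
      obtain ⟨j, hj⟩ := exists_single_of_hammingNorm_one hw
      rw [← Matrix.vecMul_vecMul, hP] at hj
      have hbj : Matrix.vecMul a M = b' j := by
        have hfj : f (b' j) = Pi.single j 1 := by
          funext k
          rw [show f (b' j) k = b'.equivFun (b' j) k from rfl, Module.Basis.equivFun_self]
          simp [Pi.single_apply, eq_comm]
        exact f.injective (hj.trans hfj.symm)
      have hbt : b' j ∈ t := by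
        have : b' j = b (e j) := by simp [b', Module.Basis.reindex_apply]
        rw [this, show b (e j) = ((e j : t) : Fin s → ZMod 2) from Module.Basis.mk_apply _ _ _]
        exact (e j).2
      exact hts hbt ⟨a, haA, hbj⟩
    · obtain ⟨x₀, hx₀⟩ : ∃ x, x ∉ Submodule.span (ZMod 2) {x : Fin s → ZMod 2 | x ∉ B} := by
        by_contra h; push_neg at h; exact hU (eq_top_iff.mpr fun x _ => h x)
      set U := Submodule.span (ZMod 2) {x : Fin s → ZMod 2 | x ∉ B} with hUdef
      have hq0 : U.mkQ x₀ ≠ 0 := by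
        rw [Submodule.mkQ_apply, ne_eq, Submodule.Quotient.mk_eq_zero]; exact hx₀
      let c := Module.Basis.ofVectorSpace (ZMod 2) ((Fin s → ZMod 2) ⧸ U)
      have hrepr : c.repr (U.mkQ x₀) ≠ 0 := fun h => hq0 (c.repr.map_eq_zero_iff.mp h)
      obtain ⟨i, hi⟩ := Finsupp.ne_iff.mp hrepr
      rw [Finsupp.coe_zero, Pi.zero_apply] at hi
      let φ : (Fin s → ZMod 2) →ₗ[ZMod 2] ZMod 2 := (c.coord i) ∘ₗ U.mkQ
      have hφx₀ : φ x₀ = 1 := by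
        apply zmod2_one
        simpa [φ, Module.Basis.coord_apply] using hi
      have hUker : ∀ u ∈ U, φ u = 0 := by
        intro u hu
        have : U.mkQ u = 0 := by
          rw [Submodule.mkQ_apply, Submodule.Quotient.mk_eq_zero]; exact hu
        simp [φ, this]
      refine ⟨LinearMap.ker φ, x₀, ?_, ?_, ?_⟩
      · have h1 : LinearMap.range φ = ⊤ := by
          rw [eq_top_iff]; intro cc _
          exact ⟨cc • x₀, by rw [map_smul, hφx₀, smul_eq_mul, mul_one]⟩
        have h2 := LinearMap.finrank_range_add_finrank_ker φ
        rw [h1, finrank_top, Module.finrank_self, hV] at h2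
        omega
      · simp [LinearMap.mem_ker, hφx₀]
      · rintro x ⟨w, hw, rfl⟩
        by_contra hxB
        have hmem : x₀ + w ∈ U := Submodule.subset_span hxB
        have h0 := hUker _ hmem
        rw [map_add, hφx₀] at h0
        rw [LinearMap.mem_ker.mp hw] at h0
        simp at h0
  · intro h M hM
    obtain ⟨W, v, hWrank, hvW, hsub⟩ := h M hM
    have hQ : Module.finrank (ZMod 2) ((Fin s → ZMod 2) ⧸ W) = 1 := by
      have := W.finrank_quotient_add_finrank
      rw [hWrank, hV] at this; omega
    have hv0 : W.mkQ v ≠ 0 := by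
      rw [Submodule.mkQ_apply, ne_eq, Submodule.Quotient.mk_eq_zero]; exact hvW
    have hspan : Submodule.span (ZMod 2) {W.mkQ v} = ⊤ := by
      apply Submodule.eq_top_of_finrank_eq
      rw [hQ, finrank_span_singleton hv0]
    have hej : ∃ j : Fin s, W.mkQ (Pi.single j 1) ≠ 0 := by
      by_contra hc; push_neg at hc
      have hWtop : W = ⊤ := by
        rw [eq_top_iff, ← (Pi.basisFun (ZMod 2) (Fin s)).span_eq, Submodule.span_le]
        rintro x ⟨j, rfl⟩
        rw [Pi.basisFun_apply]
        exact (Submodule.Quotient.mk_eq_zero W).mp (hc j)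
      rw [hWtop, finrank_top, hV] at hWrank; omega
    obtain ⟨j, hj⟩ := hej
    have hmem : W.mkQ (Pi.single j 1) ∈ Submodule.span (ZMod 2) {W.mkQ v} :=
      hspan ▸ Submodule.mem_top
    obtain ⟨cc, hcc⟩ := Submodule.mem_span_singleton.mp hmem
    have hcc1 : cc = 1 := zmod2_one (fun h0 => hj (by rw [← hcc, h0, zero_smul]))
    rw [hcc1, one_smul] at hcc
    have hdiff : v - Pi.single j 1 ∈ W := by
      rw [← Submodule.Quotient.eq]
      exact hcc
    have hdiff' : (Pi.single j 1 : Fin s → ZMod 2) - v ∈ W := by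
      have := W.neg_mem hdiff
      rwa [neg_sub] at this
    have hej' : (Pi.single j 1 : Fin s → ZMod 2) ∈
        ((fun w => v + w) '' (W : Set (Fin s → ZMod 2))) :=
      ⟨Pi.single j 1 - v, hdiff', by ring⟩
    obtain ⟨a, ha, haM⟩ := hsub hej'
    exact ⟨a, ha, by rw [haM]; exact hammingNorm_single_one j⟩
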